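/- arXiv:2211.00824 — 2 statements merged into one kernel-verified Lean document; each statement's English description precedes it below -/
import Mathlib

section
/- For any joint distribution of random variables X and Y on finite spaces with Y discrete, there exists a random variable N (on a possibly enlarged probability space) such that N is independent of Y and X is a deterministic (measurable) function of the pair (Y, N). -/
open Real

noncomputable def mass {Ω α : Type*} [Fintype Ω] [DecidableEq α]
    (p : Ω → ℝ) (X : Ω → α) (x : α) : ℝ :=
  ∑ ω, if X ω = x then p ω else 0

noncomputable def ent {Ω α : Type*} [Fintype Ω] [Fintype α] [DecidableEq α]
    (p : Ω → ℝ) (X : Ω → α) : ℝ :=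
  ∑ x, Real.negMulLog (mass p X x)

noncomputable def condEnt {Ω α β : Type*} [Fintype Ω] [Fintype α] [Fintype β]
    [DecidableEq α] [DecidableEq β] (p : Ω → ℝ) (X : Ω → α) (Y : Ω → β) : ℝ :=
  ent p (fun ω => (X ω, Y ω)) - ent p Y

noncomputable def mi {Ω α β : Type*} [Fintype Ω] [Fintype α] [Fintype β]
    [DecidableEq α] [DecidableEq β] (p : Ω → ℝ) (X : Ω → α) (Y : Ω → β) : ℝ :=
  ent p X + ent p Y - ent p (fun ω => (X ω, Y ω))

noncomputable def cmi {Ω α β γ : Type*} [Fintype Ω] [Fintype α] [Fintype β] [Fintype γ]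
    [DecidableEq α] [DecidableEq β] [DecidableEq γ]
    (p : Ω → ℝ) (A : Ω → α) (B : Ω → β) (C : Ω → γ) : ℝ :=
  condEnt p A C - condEnt p A (fun ω => (B ω, C ω))

theorem stmt_0 {Ω 𝒳 𝒴 : Type} [Fintype Ω] [DecidableEq Ω]
    [Fintype 𝒳] [DecidableEq 𝒳] [Fintype 𝒴] [DecidableEq 𝒴]
    (p : Ω → ℝ) (hp : ∀ ω, 0 ≤ p ω) (hsum : ∑ ω, p ω = 1)
    (X : Ω → 𝒳) (Y : Ω → 𝒴) :
    ∃ (Ω' : Type) (_ : Fintype Ω') (𝒩 : Type) (_ : Fintype 𝒩) (_ : DecidableEq 𝒩)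
      (p' : Ω' → ℝ) (proj : Ω' → Ω) (N : Ω' → 𝒩),
      (∀ ω', 0 ≤ p' ω') ∧ (∑ ω', p' ω' = 1) ∧
      (∀ ω, mass p' proj ω = p ω) ∧
      mi p' (fun ω' => Y (proj ω')) N = 0 ∧
      condEnt p' (fun ω' => X (proj ω')) (fun ω' => (Y (proj ω'), N ω')) = 0 := by
  classical
  have hΩ : Nonempty Ω := by
    by_contra h
    rw [not_nonempty_iff] at h
    simp [Finset.univ_eq_empty] at hsum
  obtain ⟨ω₀⟩ := hΩ
  set x₀ := X ω₀ with hx₀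
  set pY : 𝒴 → ℝ := fun y => ∑ ω, if Y ω = y then p ω else 0 with hpYdef
  set pXY : 𝒴 → 𝒳 → ℝ := fun y x => ∑ ω, if Y ω = y ∧ X ω = x then p ω else 0 with hpXYdef
  set q : 𝒴 → 𝒳 → ℝ :=
    fun y x => if pY y = 0 then (if x = x₀ then 1 else 0) else pXY y x / pY y with hqdef
  have hpY0 : ∀ y, 0 ≤ pY y := fun y =>
    Finset.sum_nonneg fun ω _ => by split <;> simp [hp ω]
  have hpXY0 : ∀ y x, 0 ≤ pXY y x := fun y x =>
    Finset.sum_nonneg fun ω _ => by split <;> simp [hp ω]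
  have hq0 : ∀ y x, 0 ≤ q y x := by
    intro y x
    simp only [hqdef]
    split
    · split <;> norm_num
    · exact div_nonneg (hpXY0 y x) (hpY0 y)
  have hpXYsum : ∀ y, ∑ x, pXY y x = pY y := by
    intro y
    simp only [hpXYdef, hpYdef]
    rw [Finset.sum_comm]
    refine Finset.sum_congr rfl fun ω _ => ?_
    by_cases h : Y ω = y
    · simp [h]
    · simp [h]
  have hq1 : ∀ y, ∑ x, q y x = 1 := by
    intro y
    simp only [hqdef]
    by_cases h : pY y = 0
    · simp [h]
    · simp only [h, if_false]
      rw [← Finset.sum_div, hpXYsum y, div_self h]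
  have hpY1 : ∑ y, pY y = 1 := by
    simp only [hpYdef]
    rw [Finset.sum_comm]
    simpa [Finset.sum_ite_eq] using hsum
  -- key: pXY y x = pY y * q y x
  have hkey : ∀ y x, pXY y x = pY y * q y x := by
    intro y x
    by_cases h : pY y = 0
    · have h0 : pXY y x = 0 := by
        have hle : pXY y x ≤ pY y := by
          refine Finset.sum_le_sum fun ω _ => ?_
          by_cases h1 : Y ω = y <;> by_cases h2 : X ω = x <;> simp [h1, h2, hp ω]
        linarith [hpXY0 y x, hle, h.le]
      simp [h0, h]
    · simp only [hqdef, h, if_false]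
      field_simp
  -- the noise function-space
  set r : Ω → 𝒴 → 𝒳 → ℝ :=
    fun ω y x => if y = Y ω then (if x = X ω then 1 else 0) else q y x with hrdef
  have hr0 : ∀ ω y x, 0 ≤ r ω y x := by
    intro ω y x
    simp only [hrdef]
    split
    · split <;> norm_num
    · exact hq0 y x
  have hr1 : ∀ ω y, ∑ x, r ω y x = 1 := by
    intro ω y
    simp only [hrdef]
    by_cases h : y = Y ω
    · simp [h]
    · simp [h, hq1 y]
  set p' : Ω × (𝒴 → 𝒳) → ℝ := fun z => p z.1 * ∏ y, r z.1 y (z.2 y) with hp'def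
  set Qf : (𝒴 → 𝒳) → ℝ := fun f => ∏ y, q y (f y) with hQfdef
  have hsum_pi : ∀ (g : 𝒴 → 𝒳 → ℝ),
      (∑ f : 𝒴 → 𝒳, ∏ y, g y (f y)) = ∏ y, ∑ x, g y x := by
    intro g
    rw [Finset.prod_univ_sum, Fintype.piFinset_univ]
  have hQf1 : ∑ f, Qf f = 1 := by
    simp only [hQfdef]
    rw [hsum_pi]
    simp [hq1]
  have hp'0 : ∀ z, 0 ≤ p' z :=
    fun z => mul_nonneg (hp z.1) (Finset.prod_nonneg fun y _ => hr0 z.1 y (z.2 y))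
  -- product decomposition of ∏ r
  have hLω : ∀ (ω : Ω) (f : 𝒴 → 𝒳), (∏ y, r ω y (f y)) =
      (if f (Y ω) = X ω then 1 else 0) * ∏ y ∈ Finset.univ.erase (Y ω), q y (f y) := by
    intro ω f
    rw [← Finset.mul_prod_erase Finset.univ _ (Finset.mem_univ (Y ω))]
    congr 1
    · simp [hrdef]
    · refine Finset.prod_congr rfl fun y hy => ?_
      have : y ≠ Y ω := (Finset.mem_erase.1 hy).1
      simp [hrdef, this]
  -- marginal on Ω
  have M0 : ∀ ω, mass p' Prod.fst ω = p ω := by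
    intro ω
    simp only [mass]
    rw [Fintype.sum_prod_type]
    rw [Finset.sum_eq_single ω]
    · have : (∑ f : 𝒴 → 𝒳, p' (ω, f)) = p ω * ∑ f : 𝒴 → 𝒳, ∏ y, r ω y (f y) := by
        simp only [hp'def]
        rw [Finset.mul_sum]
      simp [this, hsum_pi fun y x => r ω y x, hr1]
    · intro b _ hb
      simp [hb]
    · simp
  -- joint mass of (X, Y, N)
  have M4 : ∀ (x : 𝒳) (y : 𝒴) (f : 𝒴 → 𝒳),
      mass p' (fun z => (X z.1, (Y z.1, z.2))) (x, (y, f)) =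
        if f y = x then pY y * Qf f else 0 := by
    intro x y f
    simp only [mass]
    rw [Fintype.sum_prod_type]
    have step1 : ∀ ω : Ω, (∑ g : 𝒴 → 𝒳,
        if (X ω, (Y ω, g)) = (x, (y, f)) then p' (ω, g) else 0) =
        (if Y ω = y ∧ X ω = x then p ω else 0) *
          ((if f y = x then 1 else 0) * ∏ y' ∈ Finset.univ.erase y, q y' (f y')) := by
      intro ω
      have : (∑ g : 𝒴 → 𝒳, if (X ω, (Y ω, g)) = (x, (y, f)) then p' (ω, g) else 0) =
          if X ω = x ∧ Y ω = y then p' (ω, f) else 0 := by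
        by_cases h : X ω = x ∧ Y ω = y
        · rw [if_pos h]
          rw [Finset.sum_eq_single f]
          · simp [h.1, h.2]
          · intro g _ hg
            simp [Prod.ext_iff, hg]
          · simp
        · rw [if_neg h]
          refine Finset.sum_eq_zero fun g _ => ?_
          rw [if_neg]
          simp only [Prod.ext_iff, not_and] at h ⊢
          tauto
      rw [this]
      by_cases h : X ω = x ∧ Y ω = y
      · rw [if_pos h, if_pos ⟨h.2, h.1⟩]
        simp only [hp'def]
        rw [hLω ω f, h.1, h.2]
      · rw [if_neg h, if_neg (fun hc => h ⟨hc.2, hc.1⟩), zero_mul]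
    rw [Finset.sum_congr rfl fun ω _ => step1 ω]
    rw [← Finset.sum_mul]
    have hsum' : (∑ ω, if Y ω = y ∧ X ω = x then p ω else 0) = pY y * q y x := hkey y x
    rw [hsum']
    by_cases hf : f y = x
    · subst hf
      simp only [if_pos rfl, one_mul, mul_one, hQfdef]
      rw [← Finset.mul_prod_erase Finset.univ (fun y' => q y' (f y')) (Finset.mem_univ y)]
      simp only [if_true, one_mul, mul_one]
      ring
    · simp [hf]
  -- joint mass of (Y, N)
  have M3 : ∀ (y : 𝒴) (f : 𝒴 → 𝒳),
      mass p' (fun z => (Y z.1, z.2)) (y, f) = pY y * Qf f := by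
    intro y f
    have : mass p' (fun z => (Y z.1, z.2)) (y, f) =
        ∑ x, mass p' (fun z => (X z.1, (Y z.1, z.2))) (x, (y, f)) := by
      simp only [mass]
      rw [Finset.sum_comm]
      refine Finset.sum_congr rfl fun z _ => ?_
      by_cases h : (Y z.1, z.2) = (y, f)
      · rw [if_pos h]
        symm
        rw [Finset.sum_eq_single (X z.1)]
        · simp [h]
        · intro x _ hx
          simp [Prod.ext_iff, Ne.symm hx]
        · simp
      · rw [if_neg h]
        symm
        refine Finset.sum_eq_zero fun x _ => ?_
        rw [if_neg]
        simp only [Prod.ext_iff, not_and] at h ⊢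
        tauto
    rw [this, Finset.sum_congr rfl fun x _ => M4 x y f]
    rw [Finset.sum_ite_eq Finset.univ (f y) (fun _ => pY y * Qf f)]
    simp
  -- marginals
  have M1 : ∀ y : 𝒴, mass p' (fun z => Y z.1) y = pY y := by
    intro y
    have : mass p' (fun z => Y z.1) y = ∑ f, mass p' (fun z => (Y z.1, z.2)) (y, f) := by
      simp only [mass]
      rw [Finset.sum_comm]
      refine Finset.sum_congr rfl fun z _ => ?_
      by_cases h : Y z.1 = y
      · rw [if_pos h]
        symm
        rw [Finset.sum_eq_single z.2]
        · simp [h]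
        · intro g _ hg
          simp [Prod.ext_iff, Ne.symm hg]
        · simp
      · rw [if_neg h]
        symm
        refine Finset.sum_eq_zero fun g _ => by simp [Prod.ext_iff, h]
    rw [this]
    simp only [M3]
    rw [← Finset.mul_sum, hQf1, mul_one]
  have M2 : ∀ f : 𝒴 → 𝒳, mass p' (fun z => z.2) f = Qf f := by
    intro f
    have : mass p' (fun z => z.2) f = ∑ y, mass p' (fun z => (Y z.1, z.2)) (y, f) := by
      simp only [mass]
      rw [Finset.sum_comm]
      refine Finset.sum_congr rfl fun z _ => ?_
      by_cases h : z.2 = f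
      · rw [if_pos h]
        symm
        rw [Finset.sum_eq_single (Y z.1)]
        · simp [h]
        · intro y _ hy
          simp [Prod.ext_iff, Ne.symm hy]
        · simp
      · rw [if_neg h]
        symm
        refine Finset.sum_eq_zero fun y _ => by simp [Prod.ext_iff, h]
    rw [this]
    simp only [M3]
    rw [← Finset.sum_mul, hpY1, one_mul]
  have hp'sum : ∑ z, p' z = 1 := by
    have : ∑ z, p' z = ∑ ω, mass p' Prod.fst ω := by
      simp only [mass]
      rw [Finset.sum_comm]
      refine Finset.sum_congr rfl fun z _ => ?_
      simp [Finset.sum_ite_eq]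
    rw [this]
    simpa [M0] using hsum
  -- entropies
  have entY : ent p' (fun z => Y z.1) = ∑ y, negMulLog (pY y) := by
    simp only [ent, M1]
  have entN : ent p' (fun z : Ω × (𝒴 → 𝒳) => z.2) = ∑ f, negMulLog (Qf f) := by
    simp only [ent, M2]
  have entYN : ent p' (fun z => (Y z.1, z.2)) =
      (∑ y, negMulLog (pY y)) + ∑ f, negMulLog (Qf f) := by
    simp only [ent]
    rw [Fintype.sum_prod_type]
    have : ∀ y, (∑ f, negMulLog (mass p' (fun z => (Y z.1, z.2)) (y, f))) =
        pY y * (∑ f, negMulLog (Qf f)) + (∑ f, Qf f) * negMulLog (pY y) := by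
      intro y
      rw [Finset.mul_sum, Finset.sum_mul, ← Finset.sum_add_distrib]
      refine Finset.sum_congr rfl fun f _ => ?_
      rw [M3, negMulLog_mul]
      ring
    rw [Finset.sum_congr rfl fun y _ => this y]
    rw [Finset.sum_add_distrib, ← Finset.sum_mul, ← Finset.mul_sum]
    rw [hpY1, hQf1]
    ring
  have entXYN : ent p' (fun z => (X z.1, (Y z.1, z.2))) =
      ent p' (fun z => (Y z.1, z.2)) := by
    have expand : ent p' (fun z => (X z.1, (Y z.1, z.2))) =
        ∑ x, ∑ y, ∑ f, negMulLog (mass p' (fun z => (X z.1, (Y z.1, z.2))) (x, (y, f))) := by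
      simp only [ent]
      rw [Fintype.sum_prod_type]
      exact Finset.sum_congr rfl fun x _ => Fintype.sum_prod_type _
    have expand2 : ent p' (fun z => (Y z.1, z.2)) =
        ∑ y, ∑ f, negMulLog (mass p' (fun z => (Y z.1, z.2)) (y, f)) := by
      simp only [ent]
      rw [Fintype.sum_prod_type]
    rw [expand, expand2, Finset.sum_comm]
    refine Finset.sum_congr rfl fun y _ => ?_
    rw [Finset.sum_comm]
    refine Finset.sum_congr rfl fun f _ => ?_
    rw [Finset.sum_congr rfl fun x _ => by rw [M4 x y f]]
    have : ∀ x : 𝒳, negMulLog (if f y = x then pY y * Qf f else 0) =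
        if f y = x then negMulLog (pY y * Qf f) else 0 := by
      intro x
      split <;> simp [negMulLog_zero]
    rw [Finset.sum_congr rfl fun x _ => this x]
    rw [Finset.sum_ite_eq Finset.univ (f y) (fun _ => negMulLog (pY y * Qf f))]
    rw [M3]
    simp
  refine ⟨Ω × (𝒴 → 𝒳), inferInstance, 𝒴 → 𝒳, inferInstance, inferInstance,
    p', Prod.fst, Prod.snd, hp'0, hp'sum, M0, ?_, ?_⟩
  · show ent p' (fun z => Y z.1) + ent p' (fun z : Ω × (𝒴 → 𝒳) => z.2) -
      ent p' (fun z => (Y z.1, z.2)) = 0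
    rw [entY, entN, entYN]
    ring
  · show ent p' (fun z => (X z.1, (Y z.1, z.2))) - ent p' (fun z => (Y z.1, z.2)) = 0
    rw [entXYN, sub_self]
end

section
/- Suppose H(Y|X)=0, I(Y;N)=0, H(X|Y,N)=0, and X' satisfies I(X';Y)=I(X;Y) and I(X';N) ≤ ε. Then I(X'; X) ≤ I(X; Y) + ε. -/
open Real

lemma mass_nonneg {Ω α : Type*} [Fintype Ω] [DecidableEq α] (p : Ω → ℝ)
    (hp : ∀ ω, 0 ≤ p ω) (X : Ω → α) (x : α) : 0 ≤ mass p X x :=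
  Finset.sum_nonneg fun ω _ => by split <;> [exact hp ω; rfl]

lemma negMulLog_sum_le {ι : Type*} (s : Finset ι) (f : ι → ℝ) (hf : ∀ i ∈ s, 0 ≤ f i) :
    Real.negMulLog (∑ i ∈ s, f i) ≤ ∑ i ∈ s, Real.negMulLog (f i) := by
  have h1 : Real.negMulLog (∑ i ∈ s, f i) = ∑ i ∈ s, -(f i * Real.log (∑ j ∈ s, f j)) := by
    rw [Real.negMulLog, neg_mul, Finset.sum_mul, ← Finset.sum_neg_distrib]
  rw [h1]
  apply Finset.sum_le_sum
  intro i hi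
  rw [Real.negMulLog_eq_neg, neg_le_neg_iff]
  rcases eq_or_lt_of_le (hf i hi) with h0 | h0
  · simp [← h0]
  · have hle : f i ≤ ∑ j ∈ s, f j := Finset.single_le_sum hf hi
    exact mul_le_mul_of_nonneg_left (Real.log_le_log h0 hle) (hf i hi)

lemma gibbs {β γ : Type*} [Fintype β] [Fintype γ] (r : β → γ → ℝ) (hr : ∀ b c, 0 ≤ r b c) :
    (∑ b, ∑ c, Real.negMulLog (r b c)) + Real.negMulLog (∑ b, ∑ c, r b c) ≤
      (∑ b, Real.negMulLog (∑ c, r b c)) + ∑ c, Real.negMulLog (∑ b, r b c) := by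
  have hs0 : 0 ≤ ∑ b, ∑ c, r b c :=
    Finset.sum_nonneg fun b _ => Finset.sum_nonneg fun c _ => hr b c
  rcases eq_or_lt_of_le hs0 with hs | hs
  · have hz : ∀ b c, r b c = 0 := by
      intro b c
      have h1 := (Finset.sum_eq_zero_iff_of_nonneg
        (fun b (_ : b ∈ Finset.univ) => Finset.sum_nonneg fun c _ => hr b c)).1 hs.symm b
        (Finset.mem_univ b)
      exact (Finset.sum_eq_zero_iff_of_nonneg (fun c _ => hr b c)).1 h1 c (Finset.mem_univ c)
    simp [hz]
  · set s := ∑ b, ∑ c, r b c with hsdef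
    have hrb : ∀ b, 0 ≤ ∑ c, r b c := fun b => Finset.sum_nonneg fun c _ => hr b c
    have hrc : ∀ c, 0 ≤ ∑ b, r b c := fun c => Finset.sum_nonneg fun b _ => hr b c
    have hble : ∀ b, ∑ c, r b c ≤ s :=
      fun b => Finset.single_le_sum (fun b _ => hrb b) (Finset.mem_univ b)
    have key : ∀ b c, r b c - (∑ c', r b c') * (∑ b', r b' c) / s ≤
        r b c * Real.log (r b c) + r b c * Real.log s
          - r b c * Real.log (∑ c', r b c') - r b c * Real.log (∑ b', r b' c) := by
      intro b c
      rcases eq_or_lt_of_le (hr b c) with h0 | h0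
      · have : 0 ≤ (∑ c', r b c') * (∑ b', r b' c) / s :=
          div_nonneg (mul_nonneg (hrb b) (hrc c)) hs0
        simp [← h0]
        linarith
      · have hrbp : 0 < ∑ c', r b c' :=
          lt_of_lt_of_le h0 (Finset.single_le_sum (fun c' _ => hr b c') (Finset.mem_univ c))
        have hrcp : 0 < ∑ b', r b' c :=
          lt_of_lt_of_le h0 (Finset.single_le_sum (fun b' _ => hr b' c) (Finset.mem_univ b))
        have hlog : Real.log ((∑ c', r b c') * (∑ b', r b' c) / (r b c * s)) ≤
            (∑ c', r b c') * (∑ b', r b' c) / (r b c * s) - 1 :=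
          Real.log_le_sub_one_of_pos (by positivity)
        have h2 := mul_le_mul_of_nonneg_left hlog (le_of_lt h0)
        rw [Real.log_div (by positivity) (by positivity),
            Real.log_mul (ne_of_gt hrbp) (ne_of_gt hrcp),
            Real.log_mul (ne_of_gt h0) (ne_of_gt hs)] at h2
        have hq : r b c * ((∑ c', r b c') * (∑ b', r b' c) / (r b c * s) - 1)
            = (∑ c', r b c') * (∑ b', r b' c) / s - r b c := by
          field_simp
        rw [hq] at h2
        nlinarith [h2]
    have hsum0 : ∑ b, ∑ c, (r b c - (∑ c', r b c') * (∑ b', r b' c) / s) = 0 := by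
      have h1 : ∀ b, ∑ c, (r b c - (∑ c', r b c') * (∑ b', r b' c) / s)
          = ∑ c, r b c - (∑ c', r b c') * (∑ c, (∑ b', r b' c)) / s := by
        intro b
        rw [Finset.sum_sub_distrib]
        congr 1
        rw [← Finset.sum_div, ← Finset.mul_sum]
      have h2 : ∑ c, (∑ b', r b' c) = s := by rw [hsdef, Finset.sum_comm]
      simp only [h1, h2]
      rw [Finset.sum_sub_distrib]
      have h3 : ∑ b, (∑ c', r b c') * s / s = ∑ b, ∑ c', r b c' := by
        refine Finset.sum_congr rfl fun b _ => ?_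
        field_simp
      rw [h3]
      simp
    have hmain : 0 ≤ ∑ b, ∑ c, (r b c * Real.log (r b c) + r b c * Real.log s
          - r b c * Real.log (∑ c', r b c') - r b c * Real.log (∑ b', r b' c)) := by
      rw [← hsum0]
      exact Finset.sum_le_sum fun b _ => Finset.sum_le_sum fun c _ => key b c
    have e1 : ∑ b, ∑ c, r b c * Real.log (r b c) = -(∑ b, ∑ c, Real.negMulLog (r b c)) := by
      simp [Real.negMulLog_eq_neg]
    have e2 : ∑ b, ∑ c, r b c * Real.log s = -Real.negMulLog s := by
      rw [Real.negMulLog_eq_neg, neg_neg]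
      calc ∑ b, ∑ c, r b c * Real.log s = ∑ b, (∑ c, r b c) * Real.log s :=
            Finset.sum_congr rfl fun b _ => (Finset.sum_mul _ _ _).symm
        _ = s * Real.log s := (Finset.sum_mul _ _ _).symm
    have e3 : ∑ b, ∑ c, r b c * Real.log (∑ c', r b c')
        = -(∑ b, Real.negMulLog (∑ c, r b c)) := by
      simp only [Real.negMulLog_eq_neg, Finset.sum_neg_distrib, neg_neg]
      exact Finset.sum_congr rfl fun b _ => (Finset.sum_mul _ _ _).symm
    have e4 : ∑ b, ∑ c, r b c * Real.log (∑ b', r b' c)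
        = -(∑ c, Real.negMulLog (∑ b, r b c)) := by
      rw [Finset.sum_comm]
      simp only [Real.negMulLog_eq_neg, Finset.sum_neg_distrib, neg_neg]
      exact Finset.sum_congr rfl fun c _ => (Finset.sum_mul _ _ _).symm
    have esplit : ∑ b, ∑ c, (r b c * Real.log (r b c) + r b c * Real.log s
          - r b c * Real.log (∑ c', r b c') - r b c * Real.log (∑ b', r b' c))
        = (∑ b, ∑ c, r b c * Real.log (r b c)) + (∑ b, ∑ c, r b c * Real.log s)
          - (∑ b, ∑ c, r b c * Real.log (∑ c', r b c'))
          - (∑ b, ∑ c, r b c * Real.log (∑ b', r b' c)) := by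
      simp [Finset.sum_sub_distrib, Finset.sum_add_distrib]
    rw [esplit, e1, e2, e3, e4] at hmain
    linarith

lemma mass_sum_left {Ω α β : Type*} [Fintype Ω] [Fintype α] [DecidableEq α] [DecidableEq β]
    (p : Ω → ℝ) (U : Ω → α) (V : Ω → β) (b : β) :
    ∑ a, mass p (fun ω => (U ω, V ω)) (a, b) = mass p V b := by
  unfold mass
  rw [Finset.sum_comm]
  refine Finset.sum_congr rfl fun ω _ => ?_
  by_cases h : V ω = b <;> simp [Prod.ext_iff, h]

lemma mass_sum_right {Ω α β : Type*} [Fintype Ω] [Fintype β] [DecidableEq α] [DecidableEq β]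
    (p : Ω → ℝ) (U : Ω → α) (V : Ω → β) (a : α) :
    ∑ b, mass p (fun ω => (U ω, V ω)) (a, b) = mass p U a := by
  unfold mass
  rw [Finset.sum_comm]
  refine Finset.sum_congr rfl fun ω _ => ?_
  by_cases h : U ω = a <;> simp [Prod.ext_iff, h]

lemma ent_mono_left {Ω α β : Type*} [Fintype Ω] [Fintype α] [Fintype β]
    [DecidableEq α] [DecidableEq β] (p : Ω → ℝ) (hp : ∀ ω, 0 ≤ p ω)
    (U : Ω → α) (V : Ω → β) :
    ent p V ≤ ent p (fun ω => (U ω, V ω)) := by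
  unfold ent
  rw [Fintype.sum_prod_type, Finset.sum_comm]
  refine Finset.sum_le_sum fun b _ => ?_
  rw [← mass_sum_left p U V b]
  exact negMulLog_sum_le _ _ fun a _ => mass_nonneg p hp _ _

lemma ent_comp_inj {Ω α α₂ : Type*} [Fintype Ω] [Fintype α] [Fintype α₂]
    [DecidableEq α] [DecidableEq α₂] (p : Ω → ℝ) (Z : Ω → α) (e : α → α₂)
    (he : Function.Injective e) :
    ent p (fun ω => e (Z ω)) = ent p Z := by
  unfold ent
  rw [← Finset.sum_subset (Finset.subset_univ (Finset.univ.image e))]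
  · rw [Finset.sum_image (fun x _ y _ h => he h)]
    refine Finset.sum_congr rfl fun x _ => ?_
    congr 1
    unfold mass
    exact Finset.sum_congr rfl fun ω _ => by simp [he.eq_iff]
  · intro y _ hy
    have : mass p (fun ω => e (Z ω)) y = 0 := by
      unfold mass
      refine Finset.sum_eq_zero fun ω _ => ?_
      have : e (Z ω) ≠ y := fun h => hy (h ▸ Finset.mem_image_of_mem e (Finset.mem_univ _))
      simp [this]
    simp [this]

lemma ssa {Ω α β γ : Type*} [Fintype Ω] [Fintype α] [Fintype β] [Fintype γ]
    [DecidableEq α] [DecidableEq β] [DecidableEq γ] (p : Ω → ℝ) (hp : ∀ ω, 0 ≤ p ω)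
    (A : Ω → α) (B : Ω → β) (C : Ω → γ) :
    ent p (fun ω => (A ω, (B ω, C ω))) + ent p A ≤
      ent p (fun ω => (A ω, B ω)) + ent p (fun ω => (A ω, C ω)) := by
  have hmc : ∀ a b, ∑ c, mass p (fun ω => (A ω, (B ω, C ω))) (a, (b, c))
      = mass p (fun ω => (A ω, B ω)) (a, b) := by
    intro a b
    unfold mass
    rw [Finset.sum_comm]
    refine Finset.sum_congr rfl fun ω _ => ?_
    by_cases h1 : A ω = a <;> by_cases h2 : B ω = b <;> simp [Prod.ext_iff, h1, h2]
  have hmb : ∀ a c, ∑ b, mass p (fun ω => (A ω, (B ω, C ω))) (a, (b, c))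
      = mass p (fun ω => (A ω, C ω)) (a, c) := by
    intro a c
    unfold mass
    rw [Finset.sum_comm]
    refine Finset.sum_congr rfl fun ω _ => ?_
    by_cases h1 : A ω = a <;> by_cases h2 : C ω = c <;> simp [Prod.ext_iff, h1, h2]
  have hma : ∀ a, ∑ b, ∑ c, mass p (fun ω => (A ω, (B ω, C ω))) (a, (b, c))
      = mass p A a := by
    intro a
    rw [Finset.sum_congr rfl fun b _ => hmc a b]
    exact mass_sum_right p A B a
  have key : ∀ a : α,
      (∑ b, ∑ c, Real.negMulLog (mass p (fun ω => (A ω, (B ω, C ω))) (a, (b, c))))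
        + Real.negMulLog (mass p A a)
      ≤ (∑ b, Real.negMulLog (mass p (fun ω => (A ω, B ω)) (a, b)))
        + ∑ c, Real.negMulLog (mass p (fun ω => (A ω, C ω)) (a, c)) := by
    intro a
    have h := gibbs (fun b c => mass p (fun ω => (A ω, (B ω, C ω))) (a, (b, c)))
      (fun b c => mass_nonneg p hp _ _)
    simp only [hma a] at h
    calc (∑ b, ∑ c, Real.negMulLog (mass p (fun ω => (A ω, (B ω, C ω))) (a, (b, c))))
          + Real.negMulLog (mass p A a)
        ≤ (∑ b, Real.negMulLog (∑ c, mass p (fun ω => (A ω, (B ω, C ω))) (a, (b, c))))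
          + ∑ c, Real.negMulLog (∑ b, mass p (fun ω => (A ω, (B ω, C ω))) (a, (b, c))) := h
      _ = _ := by
          congr 1
          · exact Finset.sum_congr rfl fun b _ => by rw [hmc a b]
          · exact Finset.sum_congr rfl fun c _ => by rw [hmb a c]
  have hent : ent p (fun ω => (A ω, (B ω, C ω))) + ent p A
      = ∑ a, ((∑ b, ∑ c, Real.negMulLog (mass p (fun ω => (A ω, (B ω, C ω))) (a, (b, c))))
          + Real.negMulLog (mass p A a)) := by
    rw [Finset.sum_add_distrib]
    congr 1
    unfold ent
    rw [Fintype.sum_prod_type]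
    exact Finset.sum_congr rfl fun a _ => Fintype.sum_prod_type _
  have hent2 : ent p (fun ω => (A ω, B ω)) + ent p (fun ω => (A ω, C ω))
      = ∑ a, ((∑ b, Real.negMulLog (mass p (fun ω => (A ω, B ω)) (a, b)))
          + ∑ c, Real.negMulLog (mass p (fun ω => (A ω, C ω)) (a, c))) := by
    rw [Finset.sum_add_distrib]
    unfold ent
    rw [Fintype.sum_prod_type, Fintype.sum_prod_type]
  rw [hent, hent2]
  exact Finset.sum_le_sum fun a _ => key a


set_option maxHeartbeats 1000000

theorem stmt_7 {Ω α α' β γ : Type*} [Fintype Ω] [Fintype α] [DecidableEq α]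
    [Fintype α'] [DecidableEq α'] [Fintype β] [DecidableEq β] [Fintype γ] [DecidableEq γ]
    (p : Ω → ℝ) (hp : ∀ ω, 0 ≤ p ω) (hsum : ∑ ω, p ω = 1)
    (X : Ω → α) (X' : Ω → α') (Y : Ω → β) (N : Ω → γ) (ε : ℝ) (hε : 0 ≤ ε)
    (hYX : condEnt p Y X = 0)
    (hYN : mi p Y N = 0)
    (hXdet : condEnt p X (fun ω => (Y ω, N ω)) = 0)
    (hsuff : mi p X' Y = mi p X Y)
    (hmin : mi p X' N ≤ ε) :
    mi p X' X ≤ mi p X Y + ε := by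
  simp only [condEnt, mi] at hYX hYN hXdet hmin ⊢
  have hXY : ent p (fun ω => (X ω, Y ω)) = ent p (fun ω => (Y ω, X ω)) :=
    ent_comp_inj p (fun ω => (Y ω, X ω)) Prod.swap Prod.swap_injective
  have f1 := ssa p hp X X' (fun ω => (Y ω, N ω))
  have f2 := ent_mono_left p hp X (fun ω => (X' ω, (Y ω, N ω)))
  have f3 : ent p (fun ω => (X' ω, X ω)) = ent p (fun ω => (X ω, X' ω)) :=
    ent_comp_inj p (fun ω => (X ω, X' ω)) Prod.swap Prod.swap_injective
  have he : Function.Injective (fun q : α' × (β × γ) => (q.2.1, (q.1, q.2.2))) := by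
    intro q1 q2 h
    simp only [Prod.ext_iff] at h ⊢
    tauto
  have f4 : ent p (fun ω => (Y ω, (X' ω, N ω))) = ent p (fun ω => (X' ω, (Y ω, N ω))) :=
    ent_comp_inj p (fun ω => (X' ω, (Y ω, N ω))) _ he
  have f5 := ent_mono_left p hp Y (fun ω => (X' ω, N ω))
  linarith
end
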